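/- Let q be an odd prime power, m ≥ 2 an integer, and λ a partition of m with k parts. Then the discriminant of any polynomial f ∈ S_{λ,F_q} is a nonzero element d ∈ F_q^× satisfying χ_q(d) = (-1)^(m-k). -/

import Mathlib

open Polynomial
open scoped Classical

/-- The discriminant of a polynomial `f` of degree `m ≥ 2` over a field `F`, computed in an
algebraic closure via the standard formula
`disc(f) = (-1)^(m(m-1)/2) · a_m^(m-2) · ∏_i f'(α_i)`, where `a_m` is the leading coefficient
and the `α_i` are the roots of `f` (with multiplicity) in the algebraic closure; this equals
`a_m^(2m-2) · ∏_{i<j} (α_i - α_j)^2`.  For `f` of degree at most 1 it is defined to be `1`. -/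
noncomputable def polyDisc {F : Type*} [Field F] (f : F[X]) : AlgebraicClosure F :=
  if f.natDegree ≤ 1 then 1
  else
    (-1) ^ (f.natDegree * (f.natDegree - 1) / 2) *
      algebraMap F (AlgebraicClosure F) f.leadingCoeff ^ (f.natDegree - 2) *
      (Multiset.map (fun a => ((derivative f).map (algebraMap F (AlgebraicClosure F))).eval a)
        (f.map (algebraMap F (AlgebraicClosure F))).roots).prod

/-- The Möbius function on polynomials over a field: `μ f = (-1)^k` if `f` is squarefree
with `k` (distinct) monic irreducible factors, and `μ f = 0` otherwise. -/
noncomputable def polyMu {F : Type*} [Field F] (f : F[X]) : ℤ :=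
  if Squarefree f then (-1) ^ {π : F[X] | π.Monic ∧ Irreducible π ∧ π ∣ f}.ncard else 0

/-- `f` has factorization type `λ` (a partition of `m`): `f` is a product of distinct monic
irreducible polynomials whose degrees form the multiset of parts of `λ`.  The set
`S_{λ,F}` of monic squarefree polynomials of factorization type `λ` is
`{f | hasFactorizationType f λ}`. -/
def hasFactorizationType {F : Type*} [Field F] (f : F[X]) {m : ℕ} (lam : m.Partition) : Prop :=
  ∃ s : Finset F[X], (∀ π ∈ s, π.Monic ∧ Irreducible π) ∧ (∏ π ∈ s, π) = f ∧
    Multiset.map natDegree s.val = lam.parts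

section Aux

private def fiberEquiv {α : Type*} {β : α → Type*} (a : α) :
    β a ≃ {x : (Σ a', β a') // x.1 = a} where
  toFun b := ⟨⟨a, b⟩, rfl⟩
  invFun x := x.2 ▸ x.1.2
  left_inv b := rfl
  right_inv := by rintro ⟨⟨a', b⟩, rfl⟩; rfl

private lemma sigma_mulSingle {α : Type*} [DecidableEq α] {β : α → Type*}
    (a : α) (g : Equiv.Perm (β a)) :
    Equiv.Perm.sigmaCongrRight (Pi.mulSingle a g) = g.extendDomain (fiberEquiv a) := by
  classical
  refine Equiv.ext fun x => ?_
  obtain ⟨a', b⟩ := x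
  by_cases h : a' = a
  · subst h
    rw [Equiv.Perm.extendDomain_apply_subtype _ (fiberEquiv a')
      (show ((⟨a', b⟩ : Σ x, β x).1 = a') from rfl)]
    simp [fiberEquiv, Equiv.sigmaCongrRight]
  · rw [Equiv.Perm.extendDomain_apply_not_subtype _ (fiberEquiv a) (by exact h)]
    simp [Equiv.sigmaCongrRight, Pi.mulSingle_eq_of_ne h]

private lemma sign_sigmaCongrRight_aux {α : Type*} [DecidableEq α] [Fintype α] {β : α → Type*}
    [∀ a, DecidableEq (β a)] [∀ a, Fintype (β a)] (t : Finset α) (F : ∀ a, Equiv.Perm (β a))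
    (hF : ∀ a ∉ t, F a = 1) :
    Equiv.Perm.sign (Equiv.Perm.sigmaCongrRight F) = ∏ a ∈ t, Equiv.Perm.sign (F a) := by
  classical
  induction t using Finset.induction generalizing F with
  | empty =>
    have : F = 1 := funext fun a => hF a (by simp)
    rw [this, Equiv.Perm.sigmaCongrRight_one]
    simp
  | insert a t hnot ih =>
    have hdec : F = Pi.mulSingle a (F a) * Function.update F a 1 := by
      funext x
      by_cases hx : x = a
      · subst hx; simp
      · simp [Pi.mulSingle_eq_of_ne hx, Function.update_of_ne hx]
    rw [hdec, ← Equiv.Perm.sigmaCongrRight_mul, map_mul, sigma_mulSingle,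
      Equiv.Perm.sign_extendDomain, ih _ (fun x hx => by
        by_cases hxa : x = a
        · subst hxa; simp
        · rw [Function.update_of_ne hxa]; exact hF x (by simp [hx, hxa]))]
    rw [Finset.prod_insert hnot]
    have hupd : ∀ x ∈ t, Equiv.Perm.sign (Function.update F a 1 x) = Equiv.Perm.sign (F x) :=
      fun x hx => by
      have hxa : x ≠ a := by rintro rfl; exact hnot hx
      rw [Function.update_of_ne hxa]
    rw [Finset.prod_congr rfl hupd]
    have h1 : (((Pi.mulSingle a (F a) : ∀ x, Equiv.Perm (β x)) * Function.update F a 1) a)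
        = F a := by simp
    have h2 : ∀ x ∈ t, Equiv.Perm.sign
        (((Pi.mulSingle a (F a) : ∀ x, Equiv.Perm (β x)) * Function.update F a 1) x)
        = Equiv.Perm.sign (F x) := fun x hx => by
      have hxa : x ≠ a := by rintro rfl; exact hnot hx
      simp [Pi.mulSingle_eq_of_ne hxa, Function.update_of_ne hxa]
    rw [h1, Finset.prod_congr rfl h2]

private lemma sign_sigmaCongrRight {α : Type*} [DecidableEq α] [Fintype α] {β : α → Type*}
    [∀ a, DecidableEq (β a)] [∀ a, Fintype (β a)] (F : ∀ a, Equiv.Perm (β a)) :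
    Equiv.Perm.sign (Equiv.Perm.sigmaCongrRight F) = ∏ a, Equiv.Perm.sign (F a) :=
  sign_sigmaCongrRight_aux Finset.univ F (by simp)

private lemma card_pow_eq_le {K : Type*} [Field K] (N : ℕ) (hN : 2 ≤ N)
    (T : Finset K) (hT : ∀ x ∈ T, x ^ N = x) : T.card ≤ N := by
  classical
  have hdeg : (X ^ N - X : K[X]).natDegree = N := by
    rw [natDegree_sub_eq_left_of_natDegree_lt] <;> simp <;> omega
  have hp : (X ^ N - X : K[X]) ≠ 0 := fun h => by simp [h] at hdeg; omega
  have hsub : T ⊆ (X ^ N - X : K[X]).roots.toFinset := by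
    intro x hx
    rw [Multiset.mem_toFinset, mem_roots hp]
    simp [hT x hx]
  calc T.card ≤ _ := Finset.card_le_card hsub
    _ ≤ Multiset.card (X ^ N - X : K[X]).roots := Multiset.toFinset_card_le _
    _ ≤ N := le_trans (X ^ N - X : K[X]).card_roots' (le_of_eq hdeg)

private lemma exists_of_pow_card_eq {F K : Type*} [Field F] [Fintype F] [Field K] [Algebra F K]
    {x : K} (hx : x ^ (Fintype.card F) = x) : ∃ a : F, algebraMap F K a = x := by
  classical
  set q := Fintype.card F
  have hq : 2 ≤ q := Fintype.one_lt_card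
  by_contra hcon
  push_neg at hcon
  set T : Finset K := insert x (Finset.univ.image (algebraMap F K)) with hT
  have hcard : T.card = q + 1 := by
    rw [hT, Finset.card_insert_of_notMem (by simpa using fun a => hcon a),
      Finset.card_image_of_injective _ (algebraMap F K).injective, Finset.card_univ]
  have := card_pow_eq_le q hq T (by
    intro y hy
    rw [hT, Finset.mem_insert] at hy
    rcases hy with rfl | hy
    · exact hx
    · obtain ⟨a, -, rfl⟩ := Finset.mem_image.mp hy
      rw [← map_pow, FiniteField.pow_card])
  omega

private lemma minpoly_natDegree_le {F K : Type*} [Field F] [Fintype F] [Field K] [Algebra F K]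
    {α : K} (hint : IsIntegral F α) {i : ℕ} (hi : 1 ≤ i)
    (hfix : α ^ (Fintype.card F) ^ i = α) : (minpoly F α).natDegree ≤ i := by
  classical
  set q := Fintype.card F with hqdef
  have hq : 2 ≤ q := Fintype.one_lt_card
  obtain ⟨p, hchar⟩ := CharP.exists F
  haveI : CharP F p := hchar
  obtain ⟨n₀, hn₀⟩ := FiniteField.card F p
  haveI : CharP K p := charP_of_injective_algebraMap (algebraMap F K).injective p
  have hp : p.Prime := hn₀.1
  haveI : ExpChar K p := .prime hp
  set ψ : K →+* K := iterateFrobenius K p ((n₀ : ℕ) * i) with hψ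
  have hψx : ∀ x : K, ψ x = x ^ q ^ i := by
    intro x
    rw [hψ, iterateFrobenius_def, hqdef, hn₀.2, ← pow_mul]
  set S : Subfield K := RingHom.eqLocusField ψ (RingHom.id K) with hS
  have hrange : Set.range (algebraMap F K) ⊆ S := by
    rintro - ⟨a, rfl⟩
    show ψ _ = _
    rw [hψx, ← map_pow, FiniteField.pow_card_pow]
    rfl
  set S' : IntermediateField F K := S.toIntermediateField (fun a => hrange ⟨a, rfl⟩) with hS'
  have hαS : α ∈ S' := by
    show ψ α = α
    rw [hψx]; exact hfix
  have hle : IntermediateField.adjoin F {α} ≤ S' := by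
    rw [IntermediateField.adjoin_le_iff]
    simpa using hαS
  haveI : FiniteDimensional F (IntermediateField.adjoin F {α}) :=
    IntermediateField.adjoin.finiteDimensional hint
  haveI : Finite (IntermediateField.adjoin F {α}) := Module.finite_of_finite F
  haveI : Fintype (IntermediateField.adjoin F {α}) := Fintype.ofFinite _
  have hcardE : Fintype.card (IntermediateField.adjoin F {α}) =
      q ^ (minpoly F α).natDegree := by
    rw [Module.card_eq_pow_finrank (K := F), IntermediateField.adjoin.finrank hint]
  set T : Finset K := Finset.univ.image
    (fun x : IntermediateField.adjoin F {α} => (x : K)) with hT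
  have hTcard : T.card = q ^ (minpoly F α).natDegree := by
    rw [hT, Finset.card_image_of_injective _ Subtype.val_injective, Finset.card_univ, hcardE]
  have hbound := card_pow_eq_le (q ^ i) (by
      calc 2 ≤ q := hq
        _ = q ^ 1 := (pow_one q).symm
        _ ≤ q ^ i := Nat.pow_le_pow_right (by omega) hi) T (by
    intro y hy
    rw [hT, Finset.mem_image] at hy
    obtain ⟨x, -, rfl⟩ := hy
    have hxS : ψ (x : K) = (x : K) := hle x.2
    rw [hψx] at hxS
    exact hxS)
  rw [hTcard] at hbound
  exact Nat.pow_le_pow_iff_right (by omega) |>.mp hbound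

private lemma irred_orbit {F K : Type*} [Field F] [Fintype F] [Field K] [Algebra F K]
    [IsAlgClosed K] {π : F[X]} (hmonic : π.Monic) (hirr : Irreducible π) :
    ∃ w : Fin π.natDegree → K, Function.Injective w ∧
      (π.map (algebraMap F K)).roots = Multiset.map w Finset.univ.val ∧
      ∀ i, (w i) ^ (Fintype.card F) = w (finRotate π.natDegree i) := by
  classical
  set q := Fintype.card F with hqdef
  set ι := algebraMap F K with hι
  set n := π.natDegree with hn
  clear_value n
  have hπ0 : π ≠ 0 := hmonic.ne_zero
  have hn1 : 1 ≤ n := hn ▸ hirr.natDegree_pos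
  have hdeg : π.degree ≠ 0 := by
    rw [π.degree_eq_natDegree hπ0]
    simp only [ne_eq, Nat.cast_eq_zero]
    omega
  obtain ⟨α, hα⟩ := IsAlgClosed.exists_aeval_eq_zero K π hdeg
  have hroot : (π.map ι).IsRoot α := by
    rwa [IsRoot, eval_map, ← aeval_def]
  have hint : IsIntegral F α := ⟨π, hmonic, by rwa [← aeval_def]⟩
  have hmin : minpoly F α = π := (minpoly.eq_of_irreducible_of_monic hirr hα hmonic).symm
  obtain ⟨p, hchar⟩ := CharP.exists F
  haveI : CharP F p := hchar
  obtain ⟨n₀, hp, hcard⟩ := FiniteField.card F p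
  haveI : CharP K p := charP_of_injective_algebraMap (algebraMap F K).injective p
  haveI : ExpChar K p := .prime hp
  set ψ : K →+* K := iterateFrobenius K p (n₀ : ℕ) with hψ
  have hψx : ∀ x : K, ψ x = x ^ q := fun x => by rw [hψ, iterateFrobenius_def, hqdef, hcard]
  have hmapψ : (π.map ι).map ψ = π.map ι := by
    rw [Polynomial.map_map]
    congr 1
    ext a
    rw [RingHom.comp_apply, hψx, ← map_pow, FiniteField.pow_card]
  have hrootpow : ∀ x : K, (π.map ι).IsRoot x → (π.map ι).IsRoot (x ^ q) := by
    intro x hx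
    have := hx.map (f := ψ)
    rwa [hmapψ, hψx] at this
  have hiter : ∀ i : ℕ, (π.map ι).IsRoot (α ^ q ^ i) := by
    intro i
    induction i with
    | zero => simpa using hroot
    | succ i ih => rw [pow_succ, pow_mul]; exact hrootpow _ ih
  have hψpow : ∀ (k : ℕ) (x : K), (ψ ^ k : K →+* K) x = x ^ q ^ k := by
    intro k x
    induction k generalizing x with
    | zero => simp
    | succ k ih =>
      rw [pow_succ, RingHom.mul_def, RingHom.comp_apply, ih, hψx, ← pow_mul, ← pow_succ']
  have hcancel : ∀ i j : ℕ, α ^ q ^ (j + i) = α ^ q ^ i → α ^ q ^ j = α := by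
    intro i j he
    have h2 : (ψ ^ i : K →+* K) (α ^ q ^ j) = (ψ ^ i : K →+* K) α := by
      rw [hψpow, hψpow, ← pow_mul, ← pow_add]
      exact he
    exact (ψ ^ i : K →+* K).injective h2
  have hinj : ∀ i j : ℕ, i < n → j < n → α ^ q ^ i = α ^ q ^ j → i = j := by
    have key : ∀ i j : ℕ, i ≤ j → j < n → α ^ q ^ i = α ^ q ^ j → i = j := by
      intro i j hij hjn he
      by_contra hne
      have h1 : 1 ≤ j - i := by omega
      have he2 : α ^ q ^ ((j - i) + i) = α ^ q ^ i := by
        rw [show j - i + i = j from by omega]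
        exact he.symm
      have he3 := hcancel _ _ he2
      have := minpoly_natDegree_le hint h1 he3
      rw [hmin, ← hn] at this
      omega
    intro i j hi hj he
    rcases le_total i j with h | h
    · exact key i j h hj he
    · exact (key j i h hi he.symm).symm
  set w : Fin n → K := fun i => α ^ q ^ (i : ℕ) with hw
  have hwinj : Function.Injective w := by
    intro i j he
    exact Fin.ext (hinj _ _ i.2 j.2 he)
  have hcardroots : Multiset.card (π.map ι).roots = n := by
    have := splits_iff_card_roots.mp (IsAlgClosed.splits (π.map ι))
    rw [this, natDegree_map]
    exact hn.symm
  have hmap0 : π.map ι ≠ 0 := Polynomial.map_ne_zero hπ0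
  have hle : Multiset.map w Finset.univ.val ≤ (π.map ι).roots := by
    rw [Multiset.le_iff_subset (Multiset.Nodup.map hwinj Finset.univ.nodup)]
    intro x hx
    obtain ⟨i, -, rfl⟩ := Multiset.mem_map.mp hx
    rw [mem_roots hmap0]
    exact hiter i
  have hroots_eq : (π.map ι).roots = Multiset.map w Finset.univ.val := by
    refine (Multiset.eq_of_le_of_card_le hle ?_).symm
    rw [hcardroots, Multiset.card_map]
    simp
  have hcycle : α ^ q ^ n = α := by
    have hmem : α ^ q ^ n ∈ (π.map ι).roots := by
      rw [mem_roots hmap0]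
      exact hiter n
    rw [hroots_eq, Multiset.mem_map] at hmem
    obtain ⟨j, -, hj⟩ := hmem
    have he : α ^ q ^ ((n - (j : ℕ)) + (j : ℕ)) = α ^ q ^ (j : ℕ) := by
      rw [show n - (j : ℕ) + (j : ℕ) = n from by omega]
      exact hj.symm
    have h3 := hcancel _ _ he
    by_cases hj0 : (j : ℕ) = 0
    · rwa [hj0, Nat.sub_zero] at h3
    · exfalso
      have hb := minpoly_natDegree_le hint (i := n - (j : ℕ)) (by omega) h3
      rw [hmin, ← hn] at hb
      have := j.2
      omega
  refine ⟨w, hwinj, hroots_eq, ?_⟩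
  intro i
  obtain ⟨n', rfl⟩ : ∃ n', n = n' + 1 := ⟨n - 1, by omega⟩
  show (α ^ q ^ (i : ℕ)) ^ q = α ^ q ^ ((finRotate (n' + 1) i : Fin (n' + 1)) : ℕ)
  rw [← pow_mul, ← pow_succ, finRotate_succ_apply, Fin.val_add_one]
  by_cases hi : i = Fin.last n'
  · rw [if_pos hi, hi]
    simpa [Fin.last] using hcycle
  · rw [if_neg hi]

end Aux


/-- For odd `q` and a partition `λ` of `m ≥ 2` with `k` parts, the discriminant of any
polynomial in `S_{λ,F_q}` is a `d ∈ F_q^×` with `χ_q(d) = (-1)^(m-k)`. -/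
theorem stmt12 {F : Type*} [Field F] [Fintype F] [DecidableEq F] (m : ℕ)
    (hodd : Odd (Fintype.card F)) (hm : 2 ≤ m) (lam : m.Partition) (f : F[X])
    (hf : hasFactorizationType f lam) :
    ∃ d : F, d ≠ 0 ∧ quadraticChar F d = (-1 : ℤ) ^ (m - lam.parts.card) ∧
      polyDisc f = algebraMap F (AlgebraicClosure F) d := by

  classical
  obtain ⟨s, hs, hfprod, hparts⟩ := hf
  set K := AlgebraicClosure F with hK
  set em : F →+* K := algebraMap F K with hem
  set q := Fintype.card F with hq
  have hq2 : 2 ≤ q := Fintype.one_lt_card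
  have hmono : f.Monic := hfprod ▸ Polynomial.monic_prod_of_monic _ _ (fun π hπ => (hs π hπ).1)
  have hf0 : f ≠ 0 := hmono.ne_zero
  have hk : lam.parts.card = s.card := by
    rw [← hparts, Multiset.card_map]
    rfl
  have hdegsum : ∑ π ∈ s, π.natDegree = m := by
    rw [Finset.sum_eq_multiset_sum, hparts]
    exact lam.parts_sum
  have hdegf : f.natDegree = m := by
    rw [← hfprod, Polynomial.natDegree_prod _ _ (fun π hπ => (hs π hπ).2.ne_zero)]
    exact hdegsum
  -- roots structure
  have horb := fun π : {x // x ∈ s} => irred_orbit (K := K) (hs π π.2).1 (hs π π.2).2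
  choose w hwinj hwroots hwcyc using horb
  have hwmem : ∀ (π : {x // x ∈ s}) i, w π i ∈ ((π : F[X]).map em).roots := by
    intro π i
    rw [hwroots]
    exact Multiset.mem_map.mpr ⟨i, by simp, rfl⟩
  have hminw : ∀ (π : {x // x ∈ s}) i, minpoly F (w π i) = (π : F[X]) := by
    intro π i
    have h1 := hwmem π i
    rw [mem_roots (Polynomial.map_ne_zero (hs π π.2).2.ne_zero)] at h1
    refine (minpoly.eq_of_irreducible_of_monic (hs π π.2).2 ?_ (hs π π.2).1).symm
    rwa [aeval_def, ← eval_map]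
  have hdisjw : ∀ (π π' : {x // x ∈ s}), π ≠ π' → ∀ i j, w π i ≠ w π' j := by
    intro π π' hne i j he
    apply hne
    apply Subtype.ext
    rw [← hminw π i, he, hminw π' j]
  have hvinj : Function.Injective
      (fun x : (π : {x // x ∈ s}) × Fin (π : F[X]).natDegree => w x.1 x.2) := by
    rintro ⟨π, i⟩ ⟨π', j⟩ he
    by_cases hne : π = π'
    · subst hne
      simp only at he
      rw [hwinj π he]
    · exact absurd he (hdisjw _ _ hne i j)
  have hcardIdx : Fintype.card ((π : {x // x ∈ s}) × Fin (π : F[X]).natDegree) = m := by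
    rw [Fintype.card_sigma]
    simp only [Fintype.card_fin]
    rw [Finset.sum_coe_sort s (fun π => π.natDegree)]
    exact hdegsum
  set e := Fintype.equivFinOfCardEq hcardIdx with hedef
  set u : Fin m → K := fun i => w (e.symm i).1 (e.symm i).2 with hu
  have huinj : Function.Injective u := by
    intro i j he
    exact e.symm.injective (hvinj he)
  -- Frobenius
  obtain ⟨p, hchar⟩ := CharP.exists F
  haveI : CharP F p := hchar
  obtain ⟨n₀, hp, hcardq⟩ := FiniteField.card F p
  haveI : CharP K p := charP_of_injective_algebraMap (algebraMap F K).injective p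
  haveI : ExpChar K p := .prime hp
  set ψ : K →+* K := iterateFrobenius K p (n₀ : ℕ) with hψdef
  have hψx : ∀ x : K, ψ x = x ^ q := fun x => by rw [hψdef, iterateFrobenius_def, hq, hcardq]
  -- roots of f
  have hfm0 : f.map em ≠ 0 := Polynomial.map_ne_zero hf0
  have hcardroots : Multiset.card (f.map em).roots = m := by
    have := splits_iff_card_roots.mp
      (IsAlgClosed.splits (f.map em))
    rw [this, natDegree_map, hdegf]
  have hfroots : (f.map em).roots = Multiset.map u Finset.univ.val := by
    have hle : Multiset.map u Finset.univ.val ≤ (f.map em).roots := by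
      rw [Multiset.le_iff_subset (Multiset.Nodup.map huinj Finset.univ.nodup)]
      intro x hx
      obtain ⟨i, -, rfl⟩ := Multiset.mem_map.mp hx
      rw [mem_roots hfm0]
      have hdvd : ((e.symm i).1 : F[X]).map em ∣ f.map em := by
        apply Polynomial.map_dvd
        rw [← hfprod]
        exact Finset.dvd_prod_of_mem _ (e.symm i).1.2
      have hr : (((e.symm i).1 : F[X]).map em).IsRoot (u i) := by
        have h2 := hwmem (e.symm i).1 (e.symm i).2
        rw [mem_roots (Polynomial.map_ne_zero (hs _ (e.symm i).1.2).2.ne_zero)] at h2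
        exact h2
      exact hr.dvd hdvd
    refine (Multiset.eq_of_le_of_card_le hle ?_).symm
    rw [hcardroots, Multiset.card_map]
    simp
  -- the permutation
  set σι : Equiv.Perm ((π : {x // x ∈ s}) × Fin (π : F[X]).natDegree) :=
    Equiv.Perm.sigmaCongrRight (fun π => finRotate _) with hσι
  set τ : Equiv.Perm (Fin m) := e.permCongr σι with hτ
  have hψu : ∀ j : Fin m, ψ (u j) = u (τ j) := by
    intro j
    have h1 : u (τ j) = w (e.symm j).1 (finRotate _ (e.symm j).2) := by
      have h2 : e.symm (τ j) = σι (e.symm j) := by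
        rw [hτ, Equiv.permCongr_apply, Equiv.symm_apply_apply]
      show w (e.symm (τ j)).1 (e.symm (τ j)).2 = _
      rw [h2]
      rfl
    rw [h1, hψx]
    exact hwcyc (e.symm j).1 (e.symm j).2
  have hsignτ : Equiv.Perm.sign τ = (-1) ^ (m - lam.parts.card) := by
    rw [hτ, Equiv.Perm.sign_permCongr, hσι, sign_sigmaCongrRight]
    have h1 : ∀ π : {x // x ∈ s},
        Equiv.Perm.sign (finRotate (π : F[X]).natDegree)
          = (-1) ^ ((π : F[X]).natDegree - 1) := by
      intro π
      obtain ⟨n', hn'⟩ : ∃ n', (π : F[X]).natDegree = n' + 1 :=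
        ⟨(π : F[X]).natDegree - 1, by have := (hs π π.2).2.natDegree_pos; omega⟩
      rw [hn', sign_finRotate]
    rw [Finset.prod_congr rfl (fun π _ => h1 π), Finset.prod_pow_eq_pow_sum]
    congr 1
    have h3 : ∑ π : {x // x ∈ s}, ((π : F[X]).natDegree - 1) + s.card
        = ∑ π : {x // x ∈ s}, (π : F[X]).natDegree := by
      rw [← Fintype.card_coe s, ← Finset.card_univ, Finset.card_eq_sum_ones,
        ← Finset.sum_add_distrib]
      refine Finset.sum_congr rfl fun π _ => ?_
      have := (hs π π.2).2.natDegree_pos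
      omega
    have h4 : ∑ π : {x // x ∈ s}, ((π : F[X]).natDegree) = m := by
      rw [Finset.sum_coe_sort s (fun π => π.natDegree)]
      exact hdegsum
    omega
  -- vandermonde determinant
  set δ : K := (Matrix.vandermonde u).det with hδdef
  have hδ0 : δ ≠ 0 := by
    rw [hδdef, Matrix.det_vandermonde_ne_zero_iff]
    exact huinj
  have hψδ : ψ δ = ((Equiv.Perm.sign τ : ℤ) : K) * δ := by
    rw [hδdef, RingHom.map_det, RingHom.mapMatrix_apply]
    have hmat : (Matrix.vandermonde u).map ψ = (Matrix.vandermonde u).submatrix τ id := by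
      ext i j
      rw [Matrix.map_apply, Matrix.submatrix_apply, Matrix.vandermonde_apply,
        Matrix.vandermonde_apply, map_pow, hψu]
      rfl
    rw [hmat, Matrix.det_permute]
  have hδformula : δ = ∏ i : Fin m, ∏ j ∈ Finset.Ioi i, (u j - u i) := by
    rw [hδdef, Matrix.det_vandermonde]
  have hmemroot : ∀ i : Fin m, u i ∈ (f.map em).roots := by
    intro i
    rw [hfroots]
    exact Multiset.mem_map.mpr ⟨i, by simp, rfl⟩
  have hprodroots : f.map em = (Multiset.map (fun a => X - C a) (f.map em).roots).prod :=
    (IsAlgClosed.splits (f.map em)).eq_prod_roots_of_monic (hmono.map em)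
  have hderiv : ∀ i : Fin m,
      ((derivative f).map em).eval (u i) = ∏ j ∈ Finset.univ.erase i, (u i - u j) := by
    intro i
    have h1 := eval_multiset_prod_X_sub_C_derivative (hmemroot i)
    rw [← hprodroots, derivative_map] at h1
    rw [h1, hfroots, ← Multiset.map_erase _ huinj, ← Finset.erase_val, Multiset.map_map,
      Finset.prod_eq_multiset_prod]
    rfl
  -- splitting the double product
  have herase : ∀ i : Fin m, Finset.univ.erase i = Finset.Iio i ∪ Finset.Ioi i := by
    intro i
    ext j
    simp only [Finset.mem_erase, Finset.mem_univ, and_true, Finset.mem_union, Finset.mem_Iio,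
      Finset.mem_Ioi]
    constructor
    · intro h
      rcases lt_or_gt_of_ne h with h' | h'
      · exact Or.inl h'
      · exact Or.inr h'
    · rintro (h | h)
      · exact ne_of_lt h
      · exact ne_of_gt h
  have hsplit : ∀ i : Fin m, ∏ j ∈ Finset.univ.erase i, (u i - u j)
      = (∏ j ∈ Finset.Iio i, (u i - u j)) * ∏ j ∈ Finset.Ioi i, (u i - u j) := by
    intro i
    rw [herase i, Finset.prod_union (Finset.disjoint_left.mpr fun j h1 h2 =>
      absurd (Finset.mem_Ioi.mp h2) (not_lt.mpr (le_of_lt (Finset.mem_Iio.mp h1))))]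
  have hP : (∏ i : Fin m, ∏ j ∈ Finset.Iio i, (u i - u j)) = δ := by
    rw [hδformula, Finset.prod_sigma' Finset.univ (fun i => Finset.Iio i) (fun i j => u i - u j),
      Finset.prod_sigma' Finset.univ (fun i => Finset.Ioi i) (fun i j => u j - u i)]
    refine Finset.prod_nbij' (fun x => ⟨x.2, x.1⟩) (fun x => ⟨x.2, x.1⟩) ?_ ?_ ?_ ?_ ?_
    · rintro ⟨a, b⟩ hab
      simp only [Finset.mem_sigma, Finset.mem_univ, Finset.mem_Iio, true_and] at hab ⊢
      simpa using hab
    · rintro ⟨a, b⟩ hab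
      simp only [Finset.mem_sigma, Finset.mem_univ, Finset.mem_Ioi, true_and] at hab ⊢
      simpa using hab
    · rintro ⟨a, b⟩ _
      rfl
    · rintro ⟨a, b⟩ _
      rfl
    · rintro ⟨a, b⟩ _
      rfl
  have hM : (∑ i : Fin m, (Finset.Ioi i).card) = m * (m - 1) / 2 := by
    have h2 : ∀ i : Fin m, (Finset.Ioi i).card = m - 1 - (i : ℕ) := fun i => Fin.card_Ioi i
    rw [Finset.sum_congr rfl (fun i _ => h2 i), Fin.sum_univ_eq_sum_range (fun i => m - 1 - i) m]
    have h3 := Finset.sum_range_reflect (fun j => j) m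
    rw [h3]
    have h4 := Finset.sum_range_id_mul_two m
    generalize hgen : m * (m - 1) = c at h4 ⊢
    omega
  have hQ : (∏ i : Fin m, ∏ j ∈ Finset.Ioi i, (u i - u j)) = (-1 : K) ^ (m * (m - 1) / 2) * δ := by
    have h1 : ∀ i : Fin m, ∏ j ∈ Finset.Ioi i, (u i - u j)
        = (-1 : K) ^ (Finset.Ioi i).card * ∏ j ∈ Finset.Ioi i, (u j - u i) := by
      intro i
      rw [← Finset.prod_const, ← Finset.prod_mul_distrib]
      exact Finset.prod_congr rfl fun j _ => by ring
    rw [Finset.prod_congr rfl (fun i _ => h1 i), Finset.prod_mul_distrib,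
      Finset.prod_pow_eq_pow_sum, ← hδformula, hM]
  have hdisc : polyDisc f = δ * δ := by
    have hN2 : ¬ f.natDegree ≤ 1 := by rw [hdegf]; omega
    rw [polyDisc, if_neg hN2, hmono.leadingCoeff, map_one, one_pow, mul_one, hdegf]
    have hprodform :
        (Multiset.map (fun a => ((derivative f).map em).eval a) (f.map em).roots).prod
        = ∏ i : Fin m, ∏ j ∈ Finset.univ.erase i, (u i - u j) := by
      rw [hfroots, Multiset.map_map]
      rw [show (∏ i : Fin m, ∏ j ∈ Finset.univ.erase i, (u i - u j))
          = ∏ i : Fin m, ((derivative f).map em).eval (u i) from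
        (Finset.prod_congr rfl fun i _ => (hderiv i)).symm]
      rw [Finset.prod_eq_multiset_prod]
      rfl
    rw [hprodform, Finset.prod_congr rfl (fun i _ => hsplit i), Finset.prod_mul_distrib, hP, hQ]
    have hone : ((-1 : K) ^ (m * (m - 1) / 2)) * ((-1 : K) ^ (m * (m - 1) / 2)) = 1 := by
      rw [← pow_add]
      exact Even.neg_one_pow ⟨m * (m - 1) / 2, by ring⟩
    calc (-1 : K) ^ (m * (m - 1) / 2) * (δ * ((-1 : K) ^ (m * (m - 1) / 2) * δ))
        = (((-1 : K) ^ (m * (m - 1) / 2)) * ((-1 : K) ^ (m * (m - 1) / 2))) * (δ * δ) := by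
          ring
      _ = δ * δ := by rw [hone, one_mul]
  -- the element d
  have hsq : ((Equiv.Perm.sign τ : ℤ) : K) * ((Equiv.Perm.sign τ : ℤ) : K) = 1 := by
    rcases Int.units_eq_one_or (Equiv.Perm.sign τ) with hε | hε <;> rw [hε] <;> norm_num
  have hδδfix : (δ * δ) ^ q = δ * δ := by
    rw [← hψx, map_mul, hψδ]
    calc ((Equiv.Perm.sign τ : ℤ) : K) * δ * (((Equiv.Perm.sign τ : ℤ) : K) * δ)
        = (((Equiv.Perm.sign τ : ℤ) : K) * ((Equiv.Perm.sign τ : ℤ) : K)) * (δ * δ) := by ring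
      _ = δ * δ := by rw [hsq, one_mul]
  obtain ⟨a, ha⟩ := exists_of_pow_card_eq (F := F) hδδfix
  have ha0 : a ≠ 0 := by
    intro h0
    apply hδ0
    apply mul_self_eq_zero.mp
    rw [← ha, h0, map_zero]
  refine ⟨a, ha0, ?_, by rw [hdisc, ← ha]⟩
  have hsign' : ((Equiv.Perm.sign τ : ℤˣ) : ℤ) = (-1 : ℤ) ^ (m - lam.parts.card) := by
    rw [hsignτ]
    push_cast
    ring
  rw [← hsign']
  rcases Int.units_eq_one_or (Equiv.Perm.sign τ) with hε | hε
  · rw [hε, Units.val_one, quadraticChar_one_iff_isSquare ha0]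
    have hfixδ : δ ^ q = δ := by
      rw [← hψx, hψδ, hε]
      norm_num
    obtain ⟨b, hb⟩ := exists_of_pow_card_eq (F := F) hfixδ
    refine ⟨b, ?_⟩
    apply (algebraMap F K).injective
    rw [map_mul]
    rw [show algebraMap F K b = em b from rfl, hb]
    rw [show algebraMap F K a = em a from rfl, ha]
  · rw [hε]
    have hneg : ((-1 : ℤˣ) : ℤ) = -1 := rfl
    rw [hneg, quadraticChar_neg_one_iff_not_isSquare]
    rintro ⟨b, hb⟩
    have h1 : δ * δ = em b * em b := by
      rw [← ha, hb]
      exact map_mul em b b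
    have hfixemb : ψ (em b) = em b := by
      rw [hψx, ← map_pow, FiniteField.pow_card]
    have hfixcontra : ψ δ = δ → False := by
      intro h3
      rw [hψδ, hε] at h3
      have h3' : (-1 : K) * δ = δ := by
        rw [show (((-1 : ℤˣ) : ℤ) : K) = (-1 : K) by norm_num] at h3
        exact h3
      have h4 : (2 : K) * δ = 0 := by linear_combination -h3'
      rcases mul_eq_zero.mp h4 with h5 | h5
      · have h6 : (p : ℕ) ∣ 2 := by
          apply (CharP.cast_eq_zero_iff K p 2).mp
          exact_mod_cast h5
        have hp2 : p = 2 := (Nat.prime_dvd_prime_iff_eq hp Nat.prime_two).mp h6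
        have heven : Even q := by
          rw [hq, hcardq, hp2]
          exact (Nat.even_pow' (by exact_mod_cast n₀.ne_zero)).mpr even_two
        rw [hq] at heven
        exact Nat.not_even_iff_odd.mpr hodd heven
      · exact hδ0 h5
    rcases mul_self_eq_mul_self_iff.mp h1 with h2 | h2
    · exact hfixcontra (by rw [h2]; exact hfixemb)
    · exact hfixcontra (by rw [h2, map_neg, hfixemb])
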